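/- Let ℒ be a first-order language containing the language of rings and let ℚ_p carry an ℒ-structure extending its ring structure, and assume (ℚ_p, ℒ) is p-minimal. Let S ⊆ ℚ_p^m × |ℚ_p|^d be a definable set and let A ⊆ ℚ_p^m be the image of the coordinate projection of S onto ℚ_p^m. Then there is a definable function σ : A → |ℚ_p|^d such that (x, σ(x)) ∈ S for every x ∈ A. -/

import Mathlib

/-!
Setting: `(ℚ_p, ℒ)` is an expansion of the field `ℚ_p` of `p`-adic numbers, i.e. `ℒ` is a
first-order language containing the language of rings (witnessed by a language morphism
`φ : Language.ring →ᴸ L` which is an expansion on `ℚ_p`), and `ℚ_p` carries an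
`ℒ`-structure extending its ring structure.  "Definable" means `ℒ`-definable with
parameters from `ℚ_p`; "semi-algebraic" means definable in the language of rings with
parameters from `ℚ_p`.  Tuples in `ℚ_p^β` are modelled as functions `β → ℚ_p`.
-/

open FirstOrder Language

noncomputable section

namespace PadicMin

variable (p : ℕ) [Fact p.Prime]

/-- The canonical ring-language structure on `ℚ_p`. -/
instance : Language.ring.Structure ℚ_[p] :=
  (FirstOrder.Ring.compatibleRingOfRing ℚ_[p]).toStructure

/-- `S ⊆ ℚ_p^β` is ℒ-definable with parameters from `ℚ_p`. -/
def LDef (L : Language) [L.Structure ℚ_[p] ] {β : Type} (S : Set (β → ℚ_[p])) : Prop :=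
  Set.Definable (Set.univ : Set ℚ_[p]) L S

/-- `S ⊆ ℚ_p^β` is semi-algebraic: definable with parameters in the language of rings. -/
def SemiAlg {β : Type} (S : Set (β → ℚ_[p])) : Prop :=
  Set.Definable (Set.univ : Set ℚ_[p]) Language.ring S

/-- The function `f` is ℒ-definable (with parameters) on the set `X`: its graph over `X`
is a definable subset of `ℚ_p^β × ℚ_p`. -/
def DefFunOn (L : Language) [L.Structure ℚ_[p] ] {β : Type} (X : Set (β → ℚ_[p]))
    (f : (β → ℚ_[p]) → ℚ_[p]) : Prop :=
  LDef p L {z : β ⊕ Unit → ℚ_[p] | (z ∘ Sum.inl) ∈ X ∧ z (Sum.inr ()) = f (z ∘ Sum.inl)}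

/-- A global ℒ-definable function `ℚ_p^β → ℚ_p`. -/
def DefFun (L : Language) [L.Structure ℚ_[p] ] {β : Type}
    (f : (β → ℚ_[p]) → ℚ_[p]) : Prop :=
  DefFunOn p L Set.univ f

/-- The set `P_N = {x ∈ ℚ_p : ∃ y, y^N = x}` of `N`-th powers. -/
def PN (N : ℕ) : Set ℚ_[p] := {x | ∃ y : ℚ_[p], y ^ N = x}

/-- The set `P_N^* = P_N \ {0}` of nonzero `N`-th powers. -/
def PNstar (N : ℕ) : Set ℚ_[p] := {x | x ≠ 0 ∧ ∃ y : ℚ_[p], y ^ N = x}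

/-- The set `Q_{N,M}^* = ⋃_{k ∈ ℤ} p^{kN}(1 + p^M ℤ_p)`, a subgroup of `ℚ_p^×`. -/
def Qstar (N M : ℕ) : Set ℚ_[p] :=
  {x | ∃ (k : ℤ) (u : ℤ_[p]), x = (p : ℚ_[p]) ^ (k * (N : ℤ)) * (1 + (p : ℚ_[p]) ^ M * u)}

/-- A *basic* function on `ℚ_p^{β ⊕ Unit}` (the `Unit` coordinate being the last
variable): a polynomial in the last variable whose coefficients are global definable
functions of the remaining variables. -/
def IsBasicFn (L : Language) [L.Structure ℚ_[p] ] {β : Type}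
    (f : (β ⊕ Unit → ℚ_[p]) → ℚ_[p]) : Prop :=
  ∃ (d : ℕ) (a : ℕ → (β → ℚ_[p]) → ℚ_[p]),
    (∀ j ≤ d, DefFun p L (a j)) ∧
    ∀ z, f z = ∑ j ∈ Finset.range (d + 1), a j (z ∘ Sum.inl) * z (Sum.inr ()) ^ j

/-- A *basic set*: a set of the form `{z : f z ∈ P_N}` with `f` basic and `N ≥ 1`. -/
def IsBasicSet (L : Language) [L.Structure ℚ_[p] ] {β : Type}
    (S : Set (β ⊕ Unit → ℚ_[p])) : Prop :=
  ∃ (N : ℕ) (f : (β ⊕ Unit → ℚ_[p]) → ℚ_[p]),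
    1 ≤ N ∧ IsBasicFn p L f ∧ S = {z | f z ∈ PN p N}

/-- Finite boolean combinations of sets satisfying the predicate `B`. -/
inductive BoolComb {α : Type*} (B : Set α → Prop) : Set α → Prop
  | of {s : Set α} : B s → BoolComb B s
  | compl {s : Set α} : BoolComb B s → BoolComb B sᶜ
  | union {s t : Set α} : BoolComb B s → BoolComb B t → BoolComb B (s ∪ t)
  | inter {s t : Set α} : BoolComb B s → BoolComb B t → BoolComb B (s ∩ t)

/-- `(ℚ_p, ℒ)` is *p-optimal*: every definable subset of `ℚ_p^{m+1}` (for every `m`)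
is a finite boolean combination of basic sets. -/
def POptimal (L : Language) [L.Structure ℚ_[p] ] : Prop :=
  ∀ (m : ℕ) (S : Set (Fin m ⊕ Unit → ℚ_[p])),
    LDef p L S → BoolComb (IsBasicSet p L) S

/-- A boundary datum of a presented cell: either the constant `0`, the constant `∞`,
or a function with values in `ℚ_p`. -/
inductive CBound (K : Type*) (β : Type*) where
  | zero : CBound K β
  | inf : CBound K β
  | fn (f : (β → K) → K) : CBound K β

open scoped ENNReal NNReal

/-- The "norm value" of a boundary datum at a point, in `ℝ≥0∞` (`⊤` for `∞`). -/
def CBound.val {p : ℕ} [Fact p.Prime] {β : Type} :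
    CBound ℚ_[p] β → (β → ℚ_[p]) → ℝ≥0∞
  | .zero, _ => 0
  | .inf, _ => ⊤
  | .fn f, x => (‖f x‖₊ : ℝ≥0∞)

/-- Well-formedness of a boundary datum over a base `X`: in the function case, the
function must be definable on `X` with nonzero values there. -/
def CBound.WF {p : ℕ} [Fact p.Prime] (L : Language) [L.Structure ℚ_[p] ] {β : Type}
    (X : Set (β → ℚ_[p])) : CBound ℚ_[p] β → Prop
  | .zero => True
  | .inf => True
  | .fn f => (∀ x ∈ X, f x ≠ 0) ∧ DefFunOn p L X f

/-- A *presented cell mod `G`* in `ℚ_p^{m+1}`, where `G ⊆ ℚ_p` is (the underlying set of)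
a subgroup of `ℚ_p^×` of finite index: a nonempty definable base `X ⊆ ℚ_p^m`, a definable
center `c : X → ℚ_p`, boundaries `ν, μ` (each either a definable function `X → ℚ_p \ {0}`,
the constant `0`, or the constant `∞`), and `λ ∈ ℚ_p`, such that the fiber
`{t : |ν x| ≤ |t − c x| ≤ |μ x| ∧ t − c x ∈ λG}` over every `x ∈ X` is nonempty.
It is of type 0 if `λ = 0` and of type 1 otherwise. -/
structure PCell (L : Language) [L.Structure ℚ_[p] ] (m : ℕ) (G : Set ℚ_[p]) where
  base : Set (Fin m → ℚ_[p])
  base_nonempty : base.Nonempty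
  base_def : LDef p L base
  c : (Fin m → ℚ_[p]) → ℚ_[p]
  c_def : DefFunOn p L base c
  ν : CBound ℚ_[p] (Fin m)
  μ : CBound ℚ_[p] (Fin m)
  ν_wf : ν.WF L base
  μ_wf : μ.WF L base
  lam : ℚ_[p]
  fiber_nonempty : ∀ x ∈ base, ∃ t : ℚ_[p],
    ν.val x ≤ (‖t - c x‖₊ : ℝ≥0∞) ∧ (‖t - c x‖₊ : ℝ≥0∞) ≤ μ.val x ∧
    ∃ g ∈ G, t - c x = lam * g

/-- The underlying cellular set of a presented cell, inside `ℚ_p^{m+1}`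
(indexed by `Fin m ⊕ Unit`, the `Unit` coordinate being the last variable `t`). -/
def PCell.toSet {p : ℕ} [Fact p.Prime] {L : Language} [L.Structure ℚ_[p] ] {m : ℕ}
    {G : Set ℚ_[p]} (H : PCell p L m G) : Set (Fin m ⊕ Unit → ℚ_[p]) :=
  {z | (z ∘ Sum.inl) ∈ H.base ∧
    H.ν.val (z ∘ Sum.inl) ≤ (‖z (Sum.inr ()) - H.c (z ∘ Sum.inl)‖₊ : ℝ≥0∞) ∧
    (‖z (Sum.inr ()) - H.c (z ∘ Sum.inl)‖₊ : ℝ≥0∞) ≤ H.μ.val (z ∘ Sum.inl) ∧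
    ∃ g ∈ G, z (Sum.inr ()) - H.c (z ∘ Sum.inl) = H.lam * g}

/-- `(ℚ_p, ℒ)` has *definable Skolem functions*: for all `m, n`, every definable
`S ⊆ ℚ_p^{m+n}` admits a definable section of the coordinate projection onto `ℚ_p^m`
over the image of `S`. -/
def HasDefSkolem (L : Language) [L.Structure ℚ_[p] ] : Prop :=
  ∀ (m n : ℕ) (S : Set (Fin m ⊕ Fin n → ℚ_[p])), LDef p L S →
    ∃ σ : (Fin m → ℚ_[p]) → (Fin n → ℚ_[p]),
      LDef p L {z : Fin m ⊕ Fin n → ℚ_[p] |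
        (∃ y : Fin n → ℚ_[p], Sum.elim (z ∘ Sum.inl) y ∈ S) ∧
        (z ∘ Sum.inr) = σ (z ∘ Sum.inl)} ∧
      ∀ x : Fin m → ℚ_[p], (∃ y : Fin n → ℚ_[p], Sum.elim x y ∈ S) →
        Sum.elim x (σ x) ∈ S

/-- An ℒ-structure `M` is *p-minimal* (relative to the inclusion of languages
`φ : ring →ᴸ ℒ`): every ℒ-definable (with parameters from `M`) subset of `M` is
definable with parameters in the language of rings, via the reduct structure. -/
def PMinimalStruct (L : Language) (φ : Language.ring →ᴸ L) (M : Type)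
    [L.Structure M] : Prop :=
  ∀ s : Set (Fin 1 → M), Set.Definable (Set.univ : Set M) L s →
    letI : Language.ring.Structure M := φ.reduct M
    Set.Definable (Set.univ : Set M) Language.ring s

/-- `(ℚ_p, ℒ)` itself is *p-minimal*: every ℒ-definable subset of `ℚ_p` is
semi-algebraic. -/
def PMinimalQp (L : Language) [L.Structure ℚ_[p] ] : Prop :=
  ∀ s : Set (Fin 1 → ℚ_[p]), LDef p L s → SemiAlg p s

/-- `(ℚ_p, ℒ)` is *strongly p-minimal*: every ℒ-structure elementarily equivalent to it
is p-minimal. -/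
def StronglyPMinimal (L : Language) [L.Structure ℚ_[p] ] (φ : Language.ring →ᴸ L) :
    Prop :=
  ∀ (M : Type) [L.Structure M], (ℚ_[p] ≅[L] M) → PMinimalStruct L φ M

/-- `(ℚ_p, ℒ)` satisfies the *Extreme Value Property*: every continuous definable
function from a closed and bounded definable set `X ⊆ ℚ_p` to `|ℚ_p| \ {0}` attains a
minimum value.  (A function `g : X → |ℚ_p|` is definable when the set
`{(x, y) : x ∈ X ∧ |y| = g x}` is definable.) -/
def EVP (L : Language) [L.Structure ℚ_[p] ] : Prop :=
  ∀ (X : Set ℚ_[p]) (g : ℚ_[p] → ℝ),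
    Set.Definable₁ (Set.univ : Set ℚ_[p]) L X →
    IsClosed X → Bornology.IsBounded X → X.Nonempty →
    ContinuousOn g X →
    (∀ x ∈ X, ∃ y : ℚ_[p], y ≠ 0 ∧ ‖y‖ = g x) →
    LDef p L {z : Fin 2 → ℚ_[p] | z 0 ∈ X ∧ ‖z 1‖ = g (z 0)} →
    ∃ x₀ ∈ X, ∀ x ∈ X, g x₀ ≤ g x

/-- The image of `A ⊆ ℚ_p^m` under some injective coordinate projection to `ℚ_p^d`
has nonempty interior (for the `p`-adic topology). -/
def ProjNonemptyInterior (m d : ℕ) (A : Set (Fin m → ℚ_[p])) : Prop :=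
  ∃ ι : Fin d → Fin m, Function.Injective ι ∧
    (interior ((fun x : Fin m → ℚ_[p] => x ∘ ι) '' A)).Nonempty

/-- `A ⊆ ℚ_p^m` has dimension `dA` (in the sense of Haskell–Macpherson): `dA` is the
largest `d` with `1 ≤ d ≤ m` such that the image of `A` under some coordinate projection
`ℚ_p^m → ℚ_p^d` has nonempty interior, and `0` if there is no such `d`. -/
def HasDim (m : ℕ) (A : Set (Fin m → ℚ_[p])) (dA : ℕ) : Prop :=
  (dA = 0 ∧ ∀ d', 1 ≤ d' → ¬ ProjNonemptyInterior p m d' A) ∨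
  (1 ≤ dA ∧ ProjNonemptyInterior p m dA A ∧
    ∀ d', dA < d' → ¬ ProjNonemptyInterior p m d' A)

/-- A function on `ℚ_p^{β ⊕ γ}` which is polynomial in the `γ`-block of (the last)
variables, with global definable functions of the `β`-block as coefficients.
For `#γ = d` this is a *`d`-basic* function. -/
def IsPolyBasicFn (L : Language) [L.Structure ℚ_[p] ] {β γ : Type} [Fintype γ]
    (f : (β ⊕ γ → ℚ_[p]) → ℚ_[p]) : Prop :=
  ∃ (s : Finset (γ →₀ ℕ)) (a : (γ →₀ ℕ) → (β → ℚ_[p]) → ℚ_[p]),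
    (∀ e ∈ s, DefFun p L (a e)) ∧
    ∀ z, f z = ∑ e ∈ s, a e (z ∘ Sum.inl) * ∏ i : γ, z (Sum.inr i) ^ (e i)

/-- A `d`-basic set (`d = #γ`): `{z : f z ∈ P_N}` with `f` `d`-basic and `N ≥ 1`. -/
def IsPolyBasicSet (L : Language) [L.Structure ℚ_[p] ] {β γ : Type} [Fintype γ]
    (S : Set (β ⊕ γ → ℚ_[p])) : Prop :=
  ∃ (N : ℕ) (f : (β ⊕ γ → ℚ_[p]) → ℚ_[p]),
    1 ≤ N ∧ IsPolyBasicFn p L f ∧ S = {z | f z ∈ PN p N}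


variable {p}

lemma exists_root_of_norm_le_one {e : ℕ} (he : ¬ (p:ℤ) ∣ (e:ℤ)) {x : ℚ_[p]} (hx : ‖x‖ ≤ 1) :
    ∃ y : ℚ_[p], y ^ e = 1 + p * x ^ e := by
  obtain ⟨x, rfl⟩ : ∃ x' : ℤ_[p], (x' : ℚ_[p]) = x := ⟨⟨x, hx⟩, rfl⟩
  set c : ℤ_[p] := 1 + p * x ^ e with hc
  set F : Polynomial ℤ_[p] := Polynomial.X ^ e - Polynomial.C c with hF
  have h1 : F.eval 1 = -(p * x ^ e) := by simp [hF, hc]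
  have hd : F.derivative.eval 1 = (e : ℤ_[p]) := by
    simp [hF, Polynomial.derivative_X_pow]
  have hne : ‖(e : ℤ_[p])‖ = 1 := by
    have h2 : ¬ ‖((e:ℤ) : ℤ_[p])‖ < 1 := by
      rw [PadicInt.norm_int_lt_one_iff_dvd]; exact he
    have h3 := PadicInt.norm_le_one ((e:ℤ) : ℤ_[p])
    push_cast at h2 h3 ⊢
    linarith
  have hnorm : ‖F.eval 1‖ < ‖F.derivative.eval 1‖ ^ 2 := by
    rw [h1, hd, hne, one_pow, norm_neg]
    have hx1 : ‖x ^ e‖ ≤ 1 := by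
      rw [norm_pow]
      exact pow_le_one₀ (norm_nonneg _) (PadicInt.norm_le_one x)
    calc ‖(p:ℤ_[p]) * x ^ e‖ = ‖(p:ℤ_[p])‖ * ‖x ^ e‖ := norm_mul _ _
      _ ≤ ‖(p:ℤ_[p])‖ * 1 := mul_le_mul_of_nonneg_left hx1 (norm_nonneg _)
      _ = (p : ℝ)⁻¹ := by rw [mul_one, PadicInt.norm_p]
      _ < 1 := by
          have hp1 : (1:ℝ) < p := by exact_mod_cast (Fact.out : p.Prime).one_lt
          rw [inv_lt_one₀ (by linarith)]; exact hp1
  obtain ⟨z, hz, -⟩ := hensels_lemma hnorm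
  refine ⟨(z : ℚ_[p]), ?_⟩
  have : z ^ e = c := by
    have := hz
    simp [hF, sub_eq_zero] at this
    exact this
  calc ((z : ℤ_[p]) : ℚ_[p]) ^ e = ((z ^ e : ℤ_[p]) : ℚ_[p]) := by push_cast; ring
    _ = ((c : ℤ_[p]) : ℚ_[p]) := by rw [this]
    _ = 1 + p * x ^ e := by rw [hc]; push_cast; ring

lemma norm_le_one_of_pow_eq {e : ℕ} (he : 2 ≤ e) {x y : ℚ_[p]}
    (h : y ^ e = 1 + p * x ^ e) : ‖x‖ ≤ 1 := by
  by_contra hx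
  push_neg at hx
  have hp1 : (1:ℝ) < p := by exact_mod_cast (Fact.out : p.Prime).one_lt
  have hp0 : (0:ℝ) < p := by linarith
  have hx0 : x ≠ 0 := by rintro rfl; simp at hx; linarith
  set v : ℤ := x.valuation with hv
  have hxv : ‖x‖ = (p:ℝ) ^ (-v) := Padic.norm_eq_zpow_neg_valuation hx0
  have hvneg : 1 ≤ -v := by
    by_contra hle
    push_neg at hle
    have : ‖x‖ ≤ 1 := by
      rw [hxv, ← zpow_zero (p:ℝ)]
      exact zpow_le_zpow_right₀ (le_of_lt hp1) (by omega)
    linarith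
  have hnpx : ‖(p:ℚ_[p]) * x ^ e‖ = (p:ℝ) ^ ((e:ℤ) * (-v) - 1) := by
    rw [norm_mul, norm_pow, hxv, Padic.norm_p, ← zpow_natCast ((p:ℝ) ^ (-v)),
      ← zpow_mul, ← zpow_neg_one, ← zpow_add₀ (ne_of_gt hp0)]
    ring_nf
  have hgt : (1:ℝ) < ‖(p:ℚ_[p]) * x ^ e‖ := by
    rw [hnpx, ← zpow_zero (p:ℝ)]
    apply zpow_lt_zpow_right₀ hp1
    have : (2:ℤ) ≤ e := by exact_mod_cast he
    nlinarith
  have hsum : ‖(1:ℚ_[p]) + p * x ^ e‖ = (p:ℝ) ^ ((e:ℤ) * (-v) - 1) := by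
    rw [Padic.add_eq_max_of_ne, ← hnpx]
    · rw [max_eq_right]
      rw [norm_one]
      linarith [hgt]
    · rw [norm_one]; exact fun hc => by rw [← hc] at hgt; linarith
  have hy0 : y ≠ 0 := by
    rintro rfl
    rw [zero_pow (by omega), eq_comm] at h
    have : ‖(1:ℚ_[p]) + p * x ^ e‖ = 0 := by rw [h, norm_zero]
    rw [hsum] at this
    have := zpow_pos hp0 ((e:ℤ) * (-v) - 1)
    linarith
  set w : ℤ := y.valuation with hw
  have hyv : ‖y‖ = (p:ℝ) ^ (-w) := Padic.norm_eq_zpow_neg_valuation hy0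
  have heq : (p:ℝ) ^ ((-w) * e) = (p:ℝ) ^ ((e:ℤ) * (-v) - 1) := by
    rw [← hsum, ← h, norm_pow, hyv, ← zpow_natCast ((p:ℝ) ^ (-w)), ← zpow_mul]
  have hinj := (zpow_right_strictMono₀ hp1).injective heq
  have hdvd : (e:ℤ) ∣ 1 := ⟨(w - v), by nlinarith [hinj]⟩
  have : (e:ℤ) ≤ 1 := Int.le_of_dvd one_pos hdvd
  omega

lemma norm_le_one_iff_pow (x : ℚ_[p]) :
    ‖x‖ ≤ 1 ↔ ∃ y : ℚ_[p],
      y ^ (if p = 2 then 3 else 2) = 1 + p * x ^ (if p = 2 then 3 else 2) := by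
  constructor
  · intro hx
    apply exists_root_of_norm_le_one _ hx
    by_cases hp : p = 2
    · subst hp; norm_num
    · simp only [hp, if_false]
      intro hdvd
      have hp2 : (p:ℤ) ∣ 2 := by exact_mod_cast hdvd
      have h2 : (p:ℤ) ≤ 2 := Int.le_of_dvd (by norm_num) hp2
      have hpp : 2 ≤ p := (Fact.out : p.Prime).two_le
      have : p ≤ 2 := by exact_mod_cast h2
      omega
  · rintro ⟨y, hy⟩
    exact norm_le_one_of_pow_eq (by split <;> omega) hy

lemma norm_le_norm_iff (a b : ℚ_[p]) : ‖a‖ ≤ ‖b‖ ↔ ∃ c, a = b * c ∧ ‖c‖ ≤ 1 := by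
  constructor
  · intro hab
    by_cases hb : b = 0
    · subst hb
      refine ⟨0, ?_, by simp⟩
      simp only [norm_zero] at hab
      have := norm_nonneg a
      have : ‖a‖ = 0 := le_antisymm hab this
      simpa [norm_eq_zero] using this
    · refine ⟨a / b, by field_simp, ?_⟩
      rw [norm_div, div_le_one (norm_pos_iff.mpr hb)]
      exact hab
  · rintro ⟨c, rfl, hc⟩
    calc ‖b * c‖ = ‖b‖ * ‖c‖ := norm_mul b c
      _ ≤ ‖b‖ * 1 := mul_le_mul_of_nonneg_left hc (norm_nonneg _)
      _ = ‖b‖ := mul_one _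

lemma exists_canonical (K : Set ℚ_[p]) (hK : K.Nonempty) :
    ∃ w ∈ K, (‖w‖ ≤ 1 ∧ ∀ u ∈ K, ‖u‖ ≤ 1 → ‖u‖ ≤ ‖w‖) ∨
      ((∀ u ∈ K, 1 < ‖u‖) ∧ ∀ u ∈ K, ‖w‖ ≤ ‖u‖) := by
  classical
  have hp1 : (1:ℝ) < p := by exact_mod_cast (Fact.out : p.Prime).one_lt
  have hp0 : (0:ℝ) < p := by linarith
  by_cases h1 : ∃ u ∈ K, ‖u‖ ≤ 1
  · by_cases h2 : ∃ u ∈ K, 0 < ‖u‖ ∧ ‖u‖ ≤ 1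
    · obtain ⟨u₀, hu₀K, hu₀pos, hu₀le⟩ := h2
      have hu₀0 : u₀ ≠ 0 := by rintro rfl; simp at hu₀pos
      set P : ℕ → Prop := fun n => ∃ u ∈ K, ‖u‖ = (p:ℝ) ^ (-(n:ℤ))
      have hP : ∃ n, P n := by
        refine ⟨u₀.valuation.toNat, u₀, hu₀K, ?_⟩
        have hval : 0 ≤ u₀.valuation := by
          by_contra hneg
          push_neg at hneg
          have : (1:ℝ) < ‖u₀‖ := by
            rw [Padic.norm_eq_zpow_neg_valuation hu₀0, ← zpow_zero (p:ℝ)]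
            exact zpow_lt_zpow_right₀ hp1 (by omega)
          linarith
        rw [Padic.norm_eq_zpow_neg_valuation hu₀0]
        congr 1
        omega
      set n₀ := Nat.find hP with hn₀
      obtain ⟨w, hwK, hwnorm⟩ := Nat.find_spec hP
      refine ⟨w, hwK, Or.inl ⟨?_, ?_⟩⟩
      · rw [hwnorm, ← zpow_zero (p:ℝ)]
        exact zpow_le_zpow_right₀ (le_of_lt hp1) (by omega)
      · intro u huK hule
        by_cases hu0 : u = 0
        · subst hu0
          rw [norm_zero, hwnorm]
          positivity
        · have huval : 0 ≤ u.valuation := by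
            by_contra hneg
            push_neg at hneg
            have : (1:ℝ) < ‖u‖ := by
              rw [Padic.norm_eq_zpow_neg_valuation hu0, ← zpow_zero (p:ℝ)]
              exact zpow_lt_zpow_right₀ hp1 (by omega)
            linarith
          have hPu : P u.valuation.toNat := by
            refine ⟨u, huK, ?_⟩
            rw [Padic.norm_eq_zpow_neg_valuation hu0]
            congr 1
            omega
          have hle := Nat.find_min' hP hPu
          rw [Padic.norm_eq_zpow_neg_valuation hu0, hwnorm]
          apply zpow_le_zpow_right₀ (le_of_lt hp1)
          omega
    · push_neg at h2
      obtain ⟨u₀, hu₀K, hu₀le⟩ := h1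
      have hu₀z : ‖u₀‖ = 0 := by
        rcases lt_or_eq_of_le (norm_nonneg u₀) with hlt | heq
        · exact absurd hu₀le (by simpa using (h2 u₀ hu₀K hlt))
        · exact heq.symm
      refine ⟨u₀, hu₀K, Or.inl ⟨by rw [hu₀z]; norm_num, ?_⟩⟩
      intro u huK hule
      rcases lt_or_eq_of_le (norm_nonneg u) with hlt | heq
      · exact absurd hule (by simpa using (h2 u huK hlt))
      · rw [← heq, hu₀z]
  · push_neg at h1
    obtain ⟨u₀, hu₀K⟩ := hK
    have hall : ∀ u ∈ K, 1 < ‖u‖ := h1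
    have hu₀gt := hall u₀ hu₀K
    have hu₀0 : u₀ ≠ 0 := by rintro rfl; simp at hu₀gt; linarith
    set P : ℕ → Prop := fun n => ∃ u ∈ K, ‖u‖ = (p:ℝ) ^ ((n:ℤ) + 1)
    have hvalneg : ∀ u ∈ K, u ≠ 0 → u.valuation ≤ -1 := by
      intro u huK hu0
      by_contra hge
      push_neg at hge
      have : ‖u‖ ≤ 1 := by
        rw [Padic.norm_eq_zpow_neg_valuation hu0, ← zpow_zero (p:ℝ)]
        exact zpow_le_zpow_right₀ (le_of_lt hp1) (by omega)
      linarith [hall u huK]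
    have hP : ∃ n, P n := by
      refine ⟨(-u₀.valuation - 1).toNat, u₀, hu₀K, ?_⟩
      rw [Padic.norm_eq_zpow_neg_valuation hu₀0]
      congr 1
      have := hvalneg u₀ hu₀K hu₀0
      omega
    obtain ⟨w, hwK, hwnorm⟩ := Nat.find_spec hP
    refine ⟨w, hwK, Or.inr ⟨hall, ?_⟩⟩
    intro u huK
    have hu0 : u ≠ 0 := by
      rintro rfl
      have := hall 0 huK
      simp at this
      linarith
    have hPu : P (-u.valuation - 1).toNat := by
      refine ⟨u, huK, ?_⟩
      rw [Padic.norm_eq_zpow_neg_valuation hu0]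
      congr 1
      have := hvalneg u huK hu0
      omega
    have hle := Nat.find_min' hP hPu
    rw [Padic.norm_eq_zpow_neg_valuation hu0, hwnorm]
    apply zpow_le_zpow_right₀ (le_of_lt hp1)
    have := hvalneg u huK hu0
    omega

section Machinery

variable {m d : ℕ}

/-- Prefix-extendability set. -/
def Wset (S : Set (Fin m ⊕ Fin d → ℚ_[p])) (i : ℕ) : Set (Fin m ⊕ Fin d → ℚ_[p]) :=
  {z | ∃ y : Fin d → ℚ_[p], Sum.elim (z ∘ Sum.inl) y ∈ S ∧
    ∀ j : Fin d, (j : ℕ) < i → ‖y j‖ = ‖z (Sum.inr j)‖}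

/-- Update the `i`-th of the last `d` coordinates. -/
def upd (z : Fin m ⊕ Fin d → ℚ_[p]) (i : Fin d) (w : ℚ_[p]) : Fin m ⊕ Fin d → ℚ_[p] :=
  Function.update z (Sum.inr i) w

lemma upd_inl (z : Fin m ⊕ Fin d → ℚ_[p]) (i : Fin d) (w : ℚ_[p]) (a : Fin m) :
    upd z i w (Sum.inl a) = z (Sum.inl a) := by
  simp [upd, Function.update_of_ne]

lemma upd_inr_self (z : Fin m ⊕ Fin d → ℚ_[p]) (i : Fin d) (w : ℚ_[p]) :
    upd z i w (Sum.inr i) = w := by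
  simp [upd]

lemma upd_inr_ne (z : Fin m ⊕ Fin d → ℚ_[p]) (i : Fin d) (w : ℚ_[p]) {j : Fin d}
    (h : j ≠ i) : upd z i w (Sum.inr j) = z (Sum.inr j) := by
  unfold upd
  exact Function.update_of_ne (fun hc => h (Sum.inr.inj hc)) _ _

def Kset (S : Set (Fin m ⊕ Fin d → ℚ_[p])) (i : Fin d)
    (z : Fin m ⊕ Fin d → ℚ_[p]) : Set ℚ_[p] :=
  {w | upd z i w ∈ Wset S ((i : ℕ) + 1)}

def CanCond (S : Set (Fin m ⊕ Fin d → ℚ_[p])) (i : Fin d)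
    (z : Fin m ⊕ Fin d → ℚ_[p]) : Prop :=
  z (Sum.inr i) ∈ Kset S i z ∧
    ((‖z (Sum.inr i)‖ ≤ 1 ∧ ∀ w ∈ Kset S i z, ‖w‖ ≤ 1 → ‖w‖ ≤ ‖z (Sum.inr i)‖) ∨
     ((∀ w ∈ Kset S i z, 1 < ‖w‖) ∧ ∀ w ∈ Kset S i z, ‖z (Sum.inr i)‖ ≤ ‖w‖))

def Cset (S : Set (Fin m ⊕ Fin d → ℚ_[p])) : Set (Fin m ⊕ Fin d → ℚ_[p]) :=
  Wset S d ∩ {z | ∀ i : Fin d, CanCond S i z}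

lemma W_inv {S : Set (Fin m ⊕ Fin d → ℚ_[p])} {i : ℕ} {z z' : Fin m ⊕ Fin d → ℚ_[p]}
    (hl : z ∘ Sum.inl = z' ∘ Sum.inl)
    (hn : ∀ j : Fin d, (j : ℕ) < i → ‖z (Sum.inr j)‖ = ‖z' (Sum.inr j)‖) :
    z ∈ Wset S i ↔ z' ∈ Wset S i := by
  constructor
  · rintro ⟨y, hy, hnorm⟩
    exact ⟨y, by rwa [hl] at hy, fun j hj => (hnorm j hj).trans (hn j hj)⟩
  · rintro ⟨y, hy, hnorm⟩
    exact ⟨y, by rwa [← hl] at hy, fun j hj => (hnorm j hj).trans (hn j hj).symm⟩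

lemma K_inv {S : Set (Fin m ⊕ Fin d → ℚ_[p])} {i : Fin d} {z z' : Fin m ⊕ Fin d → ℚ_[p]}
    (hl : z ∘ Sum.inl = z' ∘ Sum.inl)
    (hn : ∀ j : Fin d, (j : ℕ) < (i : ℕ) → ‖z (Sum.inr j)‖ = ‖z' (Sum.inr j)‖) :
    Kset S i z = Kset S i z' := by
  ext w
  refine W_inv ?_ ?_
  · funext a; simp only [Function.comp_apply, upd_inl]; exact congrFun hl a
  · intro j hj
    rcases eq_or_ne j i with rfl | hne
    · rw [upd_inr_self, upd_inr_self]
    · rw [upd_inr_ne _ _ _ hne, upd_inr_ne _ _ _ hne]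
      have hne' : (j:ℕ) ≠ (i:ℕ) := fun hc => hne (Fin.ext hc)
      exact hn j (by omega)

lemma K_norm_inv {S : Set (Fin m ⊕ Fin d → ℚ_[p])} {i : Fin d}
    {z : Fin m ⊕ Fin d → ℚ_[p]} {w w' : ℚ_[p]} (hw : w ∈ Kset S i z)
    (hww : ‖w'‖ = ‖w‖) : w' ∈ Kset S i z := by
  have : upd z i w ∈ Wset S ((i:ℕ)+1) := hw
  refine (W_inv ?_ ?_).2 this
  · funext a; simp only [Function.comp_apply, upd_inl]
  · intro j hj
    rcases eq_or_ne j i with rfl | hne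
    · rw [upd_inr_self, upd_inr_self]; exact hww
    · rw [upd_inr_ne _ _ _ hne, upd_inr_ne _ _ _ hne]

lemma CanCond_inv {S : Set (Fin m ⊕ Fin d → ℚ_[p])} {i : Fin d}
    {z z' : Fin m ⊕ Fin d → ℚ_[p]} (hl : z ∘ Sum.inl = z' ∘ Sum.inl)
    (hn : ∀ j : Fin d, (j : ℕ) ≤ (i : ℕ) → ‖z (Sum.inr j)‖ = ‖z' (Sum.inr j)‖) :
    CanCond S i z ↔ CanCond S i z' := by
  have hKeq : Kset S i z = Kset S i z' := K_inv hl (fun j hj => hn j (by omega))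
  have hni : ‖z (Sum.inr i)‖ = ‖z' (Sum.inr i)‖ := hn i (le_refl _)
  constructor
  · rintro ⟨hmem, hbr⟩
    refine ⟨?_, ?_⟩
    · rw [← hKeq]; exact K_norm_inv hmem hni.symm
    · rw [← hKeq, ← hni]; exact hbr
  · rintro ⟨hmem, hbr⟩
    refine ⟨?_, ?_⟩
    · rw [hKeq]; exact K_norm_inv hmem hni
    · rw [hKeq, hni]; exact hbr

lemma Cset_inv {S : Set (Fin m ⊕ Fin d → ℚ_[p])} {z z' : Fin m ⊕ Fin d → ℚ_[p]}
    (hl : z ∘ Sum.inl = z' ∘ Sum.inl)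
    (hn : ∀ j : Fin d, ‖z (Sum.inr j)‖ = ‖z' (Sum.inr j)‖) :
    z ∈ Cset S ↔ z' ∈ Cset S := by
  unfold Cset
  simp only [Set.mem_inter_iff, Set.mem_setOf_eq]
  constructor
  · rintro ⟨hW, hC⟩
    exact ⟨(W_inv hl (fun j _ => hn j)).1 hW,
      fun i => (CanCond_inv hl (fun j _ => hn j)).1 (hC i)⟩
  · rintro ⟨hW, hC⟩
    exact ⟨(W_inv hl (fun j _ => hn j)).2 hW,
      fun i => (CanCond_inv hl (fun j _ => hn j)).2 (hC i)⟩

end Machinery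

section MainLemmas

variable {m d : ℕ}

lemma upd_upd (z : Fin m ⊕ Fin d → ℚ_[p]) (i : Fin d) (w w' : ℚ_[p]) :
    upd (upd z i w) i w' = upd z i w' := by
  unfold upd
  exact Function.update_idem _ _ _

lemma exists_mem_Cset {S : Set (Fin m ⊕ Fin d → ℚ_[p])} {x : Fin m → ℚ_[p]}
    (hx : ∃ y : Fin d → ℚ_[p], Sum.elim x y ∈ S) :
    ∃ z ∈ Cset S, z ∘ Sum.inl = x := by
  classical
  -- by recursion build prefixes
  have main : ∀ n : ℕ, n ≤ d → ∃ z : Fin m ⊕ Fin d → ℚ_[p], z ∘ Sum.inl = x ∧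
      z ∈ Wset S n ∧ ∀ j : Fin d, (j : ℕ) < n → CanCond S j z := by
    intro n
    induction n with
    | zero =>
      intro _
      obtain ⟨y, hy⟩ := hx
      refine ⟨Sum.elim x y, ?_, ⟨y, ?_, fun j hj => absurd hj (by omega)⟩,
        fun j hj => absurd hj (by omega)⟩
      · funext a; rfl
      · have : Sum.elim x y ∘ Sum.inl = x := by funext a; rfl
        rw [this]; exact hy
    | succ n ih =>
      intro hn
      obtain ⟨z, hzl, hzW, hzC⟩ := ih (by omega)
      have hnd : n < d := by omega
      obtain ⟨y, hyS, hynorm⟩ := hzW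
      have hyK : y ⟨n, hnd⟩ ∈ Kset S ⟨n, hnd⟩ z := by
        refine ⟨y, ?_, ?_⟩
        · have : upd z ⟨n, hnd⟩ (y ⟨n, hnd⟩) ∘ Sum.inl = z ∘ Sum.inl := by
            funext a; simp only [Function.comp_apply, upd_inl]
          rw [this]; exact hyS
        · intro j hj
          rcases eq_or_ne j ⟨n, hnd⟩ with rfl | hne
          · rw [upd_inr_self]
          · rw [upd_inr_ne _ _ _ hne]
            have hne' : (j:ℕ) ≠ n := fun hc => hne (Fin.ext hc)
            have hj' : (j:ℕ) < n + 1 := hj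
            exact hynorm j (by omega)
      obtain ⟨w, hwK, hwcan⟩ := exists_canonical (Kset S ⟨n, hnd⟩ z) ⟨y ⟨n, hnd⟩, hyK⟩
      refine ⟨upd z ⟨n, hnd⟩ w, ?_, ?_, ?_⟩
      · funext a; simp only [Function.comp_apply, upd_inl]; exact congrFun hzl a
      · exact hwK
      · intro j hj
        rcases eq_or_ne j ⟨n, hnd⟩ with rfl | hne
        · -- canonical condition at the new coordinate
          have hKeq : Kset S ⟨n, hnd⟩ (upd z ⟨n, hnd⟩ w) = Kset S ⟨n, hnd⟩ z := by
            refine K_inv ?_ ?_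
            · funext a; simp only [Function.comp_apply, upd_inl]
            · intro j' hj'
              have hj'n : j' ≠ (⟨n, hnd⟩ : Fin d) := fun hc => by
                subst hc
                simp only [Fin.val_mk] at hj'
                omega
              rw [upd_inr_ne _ _ _ hj'n]
          have hval : upd z ⟨n, hnd⟩ w (Sum.inr ⟨n, hnd⟩) = w := upd_inr_self _ _ _
          refine ⟨?_, ?_⟩
          · show upd z ⟨n, hnd⟩ w (Sum.inr ⟨n, hnd⟩) ∈ Kset S ⟨n, hnd⟩ (upd z ⟨n, hnd⟩ w)
            rw [hKeq, hval]; exact hwK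
          · rw [hKeq, hval]; exact hwcan
        · -- earlier coordinates unchanged
          have hne' : (j:ℕ) ≠ n := fun hc => hne (Fin.ext hc)
          have hjn : (j:ℕ) < n := by omega
          refine (CanCond_inv ?_ ?_).1 (hzC j hjn)
          · funext a; simp only [Function.comp_apply, upd_inl]
          · intro j' hj'
            have : j' ≠ (⟨n, hnd⟩ : Fin d) := fun hc => by
              subst hc
              simp only [Fin.val_mk] at hj'
              omega
            rw [upd_inr_ne _ _ _ this]
  obtain ⟨z, hzl, hzW, hzC⟩ := main d (le_refl d)
  exact ⟨z, ⟨hzW, fun i => hzC i i.isLt⟩, hzl⟩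

lemma norms_eq_of_mem_Cset {S : Set (Fin m ⊕ Fin d → ℚ_[p])}
    {z z' : Fin m ⊕ Fin d → ℚ_[p]} (hz : z ∈ Cset S) (hz' : z' ∈ Cset S)
    (hl : z ∘ Sum.inl = z' ∘ Sum.inl) :
    ∀ j : Fin d, ‖z (Sum.inr j)‖ = ‖z' (Sum.inr j)‖ := by
  obtain ⟨-, hzC⟩ := hz
  obtain ⟨-, hz'C⟩ := hz'
  have main : ∀ n : ℕ, ∀ j : Fin d, (j : ℕ) = n → ‖z (Sum.inr j)‖ = ‖z' (Sum.inr j)‖ := by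
    intro n
    induction n using Nat.strong_induction_on with
    | _ n ih =>
      intro j hj
      have hKeq : Kset S j z = Kset S j z' :=
        K_inv hl (fun j' hj' => ih (j' : ℕ) (by omega) j' rfl)
      obtain ⟨hmem, hbr⟩ := hzC j
      obtain ⟨hmem', hbr'⟩ := hz'C j
      rcases hbr with ⟨hle, hmax⟩ | ⟨hgt, hmin⟩ <;>
        rcases hbr' with ⟨hle', hmax'⟩ | ⟨hgt', hmin'⟩
      · refine le_antisymm ?_ ?_
        · exact hmax' (z (Sum.inr j)) (by rwa [← hKeq]) hle
        · exact hmax (z' (Sum.inr j)) (by rwa [hKeq]) hle'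
      · exact absurd hle (by have := hgt' (z (Sum.inr j)) (by rwa [← hKeq]); linarith)
      · exact absurd hle' (by have := hgt (z' (Sum.inr j)) (by rwa [hKeq]); linarith)
      · exact le_antisymm (hmin (z' (Sum.inr j)) (by rwa [hKeq]))
          (hmin' (z (Sum.inr j)) (by rwa [← hKeq]))
  exact fun j => main (j : ℕ) j rfl

lemma mem_S_of_mem_Cset {S : Set (Fin m ⊕ Fin d → ℚ_[p])}
    (hinv : ∀ z z' : Fin m ⊕ Fin d → ℚ_[p], z ∘ Sum.inl = z' ∘ Sum.inl →
      (∀ i : Fin d, ‖z (Sum.inr i)‖ = ‖z' (Sum.inr i)‖) → (z ∈ S ↔ z' ∈ S))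
    {z : Fin m ⊕ Fin d → ℚ_[p]} (hz : z ∈ Cset S) :
    Sum.elim (z ∘ Sum.inl) (z ∘ Sum.inr) ∈ S := by
  obtain ⟨⟨y, hyS, hynorm⟩, -⟩ := hz
  refine (hinv (Sum.elim (z ∘ Sum.inl) y) (Sum.elim (z ∘ Sum.inl) (z ∘ Sum.inr)) ?_ ?_).1 hyS
  · funext a; rfl
  · intro i
    exact hynorm i i.isLt

end MainLemmas

section Formulas

/-- Numeral term in the language of rings. -/
def natTerm (β : Type) : ℕ → Language.ring.Term β
  | 0 => 0
  | n+1 => natTerm β n + 1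

/-- Power of a term. -/
def powTerm {β : Type} (t : Language.ring.Term β) : ℕ → Language.ring.Term β
  | 0 => 1
  | n+1 => powTerm t n * t

lemma realize_natTerm {β : Type} (v : β → ℚ_[p]) (n : ℕ) :
    (natTerm β n).realize v = (n : ℚ_[p]) := by
  letI := FirstOrder.Ring.compatibleRingOfRing ℚ_[p]
  induction n with
  | zero => simp [natTerm]
  | succ n ih =>
    show Term.realize v (natTerm β n + 1) = _
    rw [FirstOrder.Ring.realize_add, FirstOrder.Ring.realize_one, ih]
    push_cast
    ring

lemma realize_powTerm {β : Type} (t : Language.ring.Term β) (v : β → ℚ_[p]) (n : ℕ) :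
    (powTerm t n).realize v = (t.realize v) ^ n := by
  letI := FirstOrder.Ring.compatibleRingOfRing ℚ_[p]
  induction n with
  | zero => simp [powTerm]
  | succ n ih => simp [powTerm, ih]; ring

/-- Formula for `‖x‖ ≤ 1`. -/
def zpFml (p : ℕ) : Language.ring.Formula (Fin 1) :=
  BoundedFormula.ex
    (Term.bdEqual (powTerm (Term.var (Sum.inr 0)) (if p = 2 then 3 else 2))
      (1 + natTerm _ p * powTerm (Term.var (Sum.inl 0)) (if p = 2 then 3 else 2)))

/-- Formula for `‖x‖ ≤ ‖y‖`. -/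
def leFml (p : ℕ) : Language.ring.Formula (Fin 2) :=
  BoundedFormula.ex (BoundedFormula.ex
    ((Term.bdEqual (Term.var (Sum.inl 0)) (Term.var (Sum.inl 1) * Term.var (Sum.inr 0))) ⊓
     (Term.bdEqual (powTerm (Term.var (Sum.inr 1)) (if p = 2 then 3 else 2))
       (1 + natTerm _ p * powTerm (Term.var (Sum.inr 0)) (if p = 2 then 3 else 2)))))

lemma realize_zpFml (v : Fin 1 → ℚ_[p]) :
    (zpFml p).Realize v ↔ ‖v 0‖ ≤ 1 := by
  letI := FirstOrder.Ring.compatibleRingOfRing ℚ_[p]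
  rw [norm_le_one_iff_pow]
  unfold zpFml
  rw [Formula.Realize]
  simp only [BoundedFormula.realize_ex, BoundedFormula.realize_bdEqual]
  constructor
  · rintro ⟨y, hy⟩
    refine ⟨y, ?_⟩
    simpa [realize_powTerm, realize_natTerm, Fin.snoc] using hy
  · rintro ⟨y, hy⟩
    refine ⟨y, ?_⟩
    simpa [realize_powTerm, realize_natTerm, Fin.snoc] using hy

lemma realize_leFml (v : Fin 2 → ℚ_[p]) :
    (leFml p).Realize v ↔ ‖v 0‖ ≤ ‖v 1‖ := by
  letI := FirstOrder.Ring.compatibleRingOfRing ℚ_[p]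
  rw [norm_le_norm_iff]
  unfold leFml
  rw [Formula.Realize]
  simp only [BoundedFormula.realize_ex, BoundedFormula.realize_inf,
    BoundedFormula.realize_bdEqual]
  constructor
  · rintro ⟨c, y, h1, h2⟩
    refine ⟨c, ?_, ?_⟩
    · simpa [Fin.snoc] using h1
    · rw [norm_le_one_iff_pow]
      refine ⟨y, ?_⟩
      simpa [realize_powTerm, realize_natTerm, Fin.snoc] using h2
  · rintro ⟨c, h1, h2⟩
    rw [norm_le_one_iff_pow] at h2
    obtain ⟨y, hy⟩ := h2
    refine ⟨c, y, ?_, ?_⟩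
    · simpa [Fin.snoc] using h1
    · simpa [realize_powTerm, realize_natTerm, Fin.snoc] using hy

end Formulas

section Defin

variable (L : Language) [L.Structure ℚ_[p] ]

lemma ldef_norm_le (φq : Language.ring →ᴸ L) [φq.IsExpansionOn ℚ_[p] ] {β : Type} (a b : β) :
    LDef p L {u : β → ℚ_[p] | ‖u a‖ ≤ ‖u b‖} := by
  have h0 : (∅ : Set ℚ_[p]).Definable Language.ring {v : Fin 2 → ℚ_[p] | ‖v 0‖ ≤ ‖v 1‖} := by
    rw [Set.empty_definable_iff]
    refine ⟨leFml p, ?_⟩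
    ext v
    simp [realize_leFml]
  have h1 := (h0.mono (Set.empty_subset Set.univ)).map_expansion φq
  have h2 := h1.preimage_comp (![a, b] : Fin 2 → β)
  have heq : (fun g : β → ℚ_[p] => g ∘ ![a, b]) ⁻¹' {v : Fin 2 → ℚ_[p] | ‖v 0‖ ≤ ‖v 1‖}
      = {u : β → ℚ_[p] | ‖u a‖ ≤ ‖u b‖} := by
    ext u
    simp [Matrix.cons_val_zero, Matrix.cons_val_one, Matrix.head_cons]
  rw [heq] at h2
  exact h2

lemma ldef_norm_le_one (φq : Language.ring →ᴸ L) [φq.IsExpansionOn ℚ_[p] ] {β : Type} (a : β) :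
    LDef p L {u : β → ℚ_[p] | ‖u a‖ ≤ 1} := by
  have h0 : (∅ : Set ℚ_[p]).Definable Language.ring {v : Fin 1 → ℚ_[p] | ‖v 0‖ ≤ 1} := by
    rw [Set.empty_definable_iff]
    refine ⟨zpFml p, ?_⟩
    ext v
    simp [realize_zpFml]
  have h1 := (h0.mono (Set.empty_subset Set.univ)).map_expansion φq
  have h2 := h1.preimage_comp (![a] : Fin 1 → β)
  have heq : (fun g : β → ℚ_[p] => g ∘ ![a]) ⁻¹' {v : Fin 1 → ℚ_[p] | ‖v 0‖ ≤ 1}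
      = {u : β → ℚ_[p] | ‖u a‖ ≤ 1} := by
    ext u
    simp [Matrix.cons_val_zero]
  rw [heq] at h2
  exact h2

variable {m d : ℕ}

lemma ldef_Wset (φq : Language.ring →ᴸ L) [φq.IsExpansionOn ℚ_[p] ] {S : Set (Fin m ⊕ Fin d → ℚ_[p])} (hS : LDef p L S) (i : ℕ) :
    LDef p L (Wset S i) := by
  classical
  let r : Fin m ⊕ Fin d → (Fin m ⊕ Fin d) ⊕ Fin d := Sum.elim (Sum.inl ∘ Sum.inl) Sum.inr
  have hS1 : Set.Definable Set.univ L
      ((fun g : ((Fin m ⊕ Fin d) ⊕ Fin d) → ℚ_[p] => g ∘ r) ⁻¹' S) :=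
    Set.Definable.preimage_comp r hS
  have hN : ∀ j : Fin d, LDef p L
      {u : ((Fin m ⊕ Fin d) ⊕ Fin d) → ℚ_[p] |
        ‖u (Sum.inr j)‖ = ‖u (Sum.inl (Sum.inr j))‖} := by
    intro j
    have h1 := ldef_norm_le (p := p) L φq (Sum.inr j : (Fin m ⊕ Fin d) ⊕ Fin d) (Sum.inl (Sum.inr j))
    have h2 := ldef_norm_le (p := p) L φq (Sum.inl (Sum.inr j) : (Fin m ⊕ Fin d) ⊕ Fin d) (Sum.inr j)
    have h3 := Set.Definable.inter h1 h2
    have heq : ({u : ((Fin m ⊕ Fin d) ⊕ Fin d) → ℚ_[p] |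
          ‖u (Sum.inr j)‖ ≤ ‖u (Sum.inl (Sum.inr j))‖} ∩
        {u | ‖u (Sum.inl (Sum.inr j))‖ ≤ ‖u (Sum.inr j)‖})
        = {u : ((Fin m ⊕ Fin d) ⊕ Fin d) → ℚ_[p] |
            ‖u (Sum.inr j)‖ = ‖u (Sum.inl (Sum.inr j))‖} := by
      ext u
      simp only [Set.mem_inter_iff, Set.mem_setOf_eq]
      constructor
      · rintro ⟨hab, hba⟩; exact le_antisymm hab hba
      · intro h; exact ⟨le_of_eq h, ge_of_eq h⟩
    rw [heq] at h3
    exact h3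
  have hT : Set.Definable Set.univ L
      (((fun g : ((Fin m ⊕ Fin d) ⊕ Fin d) → ℚ_[p] => g ∘ r) ⁻¹' S) ∩
       ⋂ j ∈ Finset.univ.filter (fun j : Fin d => (j : ℕ) < i),
         {u : ((Fin m ⊕ Fin d) ⊕ Fin d) → ℚ_[p] |
           ‖u (Sum.inr j)‖ = ‖u (Sum.inl (Sum.inr j))‖}) :=
    Set.Definable.inter hS1 (Set.definable_biInter_finset (fun j => hN j) _)
  have himg := Set.Definable.image_comp hT (Sum.inl : Fin m ⊕ Fin d → (Fin m ⊕ Fin d) ⊕ Fin d)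
  have heq : ((fun g : ((Fin m ⊕ Fin d) ⊕ Fin d) → ℚ_[p] => g ∘ Sum.inl) ''
      (((fun g : ((Fin m ⊕ Fin d) ⊕ Fin d) → ℚ_[p] => g ∘ r) ⁻¹' S) ∩
       ⋂ j ∈ Finset.univ.filter (fun j : Fin d => (j : ℕ) < i),
         {u : ((Fin m ⊕ Fin d) ⊕ Fin d) → ℚ_[p] |
           ‖u (Sum.inr j)‖ = ‖u (Sum.inl (Sum.inr j))‖}))
      = Wset S i := by
    ext z
    constructor
    · rintro ⟨u, ⟨huS, huN⟩, rfl⟩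
      refine ⟨u ∘ Sum.inr, ?_, ?_⟩
      · have : Sum.elim ((u ∘ Sum.inl) ∘ Sum.inl) (u ∘ Sum.inr) = u ∘ r := by
          funext a; cases a <;> rfl
        rw [this]; exact huS
      · intro j hj
        have := Set.mem_iInter₂.1 huN j (Finset.mem_filter.2 ⟨Finset.mem_univ _, hj⟩)
        exact this
    · rintro ⟨y, hyS, hyn⟩
      refine ⟨Sum.elim z y, ⟨?_, ?_⟩, ?_⟩
      · have : Sum.elim z y ∘ r = Sum.elim (z ∘ Sum.inl) y := by
          funext a; cases a <;> rfl
        show Sum.elim z y ∘ r ∈ S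
        rw [this]; exact hyS
      · refine Set.mem_iInter₂.2 (fun j hj => ?_)
        have hj' : (j : ℕ) < i := (Finset.mem_filter.1 hj).2
        exact hyn j hj'
      · funext a; rfl
  rw [heq] at himg
  exact himg

end Defin

section Defin2

variable (L : Language) [L.Structure ℚ_[p] ]
variable {m d : ℕ}

lemma ldef_CanCond (φq : Language.ring →ᴸ L) [φq.IsExpansionOn ℚ_[p] ]
    {S : Set (Fin m ⊕ Fin d → ℚ_[p])} (hS : LDef p L S) (i : Fin d) :
    LDef p L {z : Fin m ⊕ Fin d → ℚ_[p] | CanCond S i z} := by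
  classical
  set q : Fin m ⊕ Fin d → (Fin m ⊕ Fin d) ⊕ Fin 1 :=
    fun a => if a = Sum.inr i then Sum.inr 0 else Sum.inl a with hq
  have hqv : ∀ v : ((Fin m ⊕ Fin d) ⊕ Fin 1) → ℚ_[p],
      v ∘ q = upd (v ∘ Sum.inl) i (v (Sum.inr 0)) := by
    intro v
    funext a
    by_cases h : a = Sum.inr i
    · subst h
      show v (q (Sum.inr i)) = upd (v ∘ Sum.inl) i (v (Sum.inr 0)) (Sum.inr i)
      rw [upd_inr_self]
      simp [hq]
    · simp only [Function.comp_apply, hq, if_neg h]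
      show v (Sum.inl a) = Function.update (v ∘ Sum.inl) (Sum.inr i) (v (Sum.inr 0)) a
      rw [Function.update_of_ne h]
      rfl
  set U : Set (((Fin m ⊕ Fin d) ⊕ Fin 1) → ℚ_[p]) :=
    (fun g : ((Fin m ⊕ Fin d) ⊕ Fin 1) → ℚ_[p] => g ∘ q) ⁻¹' (Wset S ((i : ℕ) + 1)) with hU
  have hUdef : Set.Definable Set.univ L U :=
    Set.Definable.preimage_comp q (ldef_Wset L φq hS ((i : ℕ) + 1))
  have hUmem : ∀ v : ((Fin m ⊕ Fin d) ⊕ Fin 1) → ℚ_[p],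
      v ∈ U ↔ v (Sum.inr 0) ∈ Kset S i (v ∘ Sum.inl) := by
    intro v
    show v ∘ q ∈ Wset S ((i : ℕ) + 1) ↔ _
    rw [hqv v]
    exact Iff.rfl
  -- auxiliary definable sets
  have hWLE1 : Set.Definable Set.univ L
      {v : ((Fin m ⊕ Fin d) ⊕ Fin 1) → ℚ_[p] | ‖v (Sum.inr 0)‖ ≤ 1} :=
    ldef_norm_le_one (p := p) L φq _
  have hLEzw : Set.Definable Set.univ L
      {v : ((Fin m ⊕ Fin d) ⊕ Fin 1) → ℚ_[p] | ‖v (Sum.inr 0)‖ ≤ ‖v (Sum.inl (Sum.inr i))‖} :=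
    ldef_norm_le (p := p) L φq _ _
  have hLEwz : Set.Definable Set.univ L
      {v : ((Fin m ⊕ Fin d) ⊕ Fin 1) → ℚ_[p] | ‖v (Sum.inl (Sum.inr i))‖ ≤ ‖v (Sum.inr 0)‖} :=
    ldef_norm_le (p := p) L φq _ _
  have hZLE1 : Set.Definable Set.univ L
      {z : Fin m ⊕ Fin d → ℚ_[p] | ‖z (Sum.inr i)‖ ≤ 1} :=
    ldef_norm_le_one (p := p) L φq _
  -- images
  have hproj : ∀ (T : Set (((Fin m ⊕ Fin d) ⊕ Fin 1) → ℚ_[p])),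
      Set.Definable Set.univ L T → Set.Definable Set.univ L
        ((fun g : ((Fin m ⊕ Fin d) ⊕ Fin 1) → ℚ_[p] => g ∘ Sum.inl) '' T) :=
    fun T hT => Set.Definable.image_comp hT _
  have hmemimg : ∀ (T : Set (((Fin m ⊕ Fin d) ⊕ Fin 1) → ℚ_[p]))
      (hT : ∀ v v' : ((Fin m ⊕ Fin d) ⊕ Fin 1) → ℚ_[p],
        v ∘ Sum.inl = v' ∘ Sum.inl → v (Sum.inr 0) = v' (Sum.inr 0) → (v ∈ T ↔ v' ∈ T))
      (z : Fin m ⊕ Fin d → ℚ_[p]),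
      z ∈ (fun g : ((Fin m ⊕ Fin d) ⊕ Fin 1) → ℚ_[p] => g ∘ Sum.inl) '' T ↔
        ∃ w : ℚ_[p], Sum.elim z (fun _ => w) ∈ T := by
    intro T hT z
    constructor
    · rintro ⟨v, hv, rfl⟩
      refine ⟨v (Sum.inr 0), ?_⟩
      refine (hT v (Sum.elim (v ∘ Sum.inl) (fun _ => v (Sum.inr 0))) ?_ ?_).1 hv
      · funext a; rfl
      · rfl
    · rintro ⟨w, hw⟩
      exact ⟨Sum.elim z (fun _ => w), hw, by funext a; rfl⟩
  -- the three projection sets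
  set B2a : Set (((Fin m ⊕ Fin d) ⊕ Fin 1) → ℚ_[p]) :=
    U ∩ {v | ‖v (Sum.inr 0)‖ ≤ 1} with hB2a
  set B1 : Set (((Fin m ⊕ Fin d) ⊕ Fin 1) → ℚ_[p]) :=
    B2a ∩ {v | ‖v (Sum.inr 0)‖ ≤ ‖v (Sum.inl (Sum.inr i))‖}ᶜ with hB1
  set B2b : Set (((Fin m ⊕ Fin d) ⊕ Fin 1) → ℚ_[p]) :=
    U ∩ {v | ‖v (Sum.inl (Sum.inr i))‖ ≤ ‖v (Sum.inr 0)‖}ᶜ with hB2b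
  have hB1def : Set.Definable Set.univ L B1 := (hUdef.inter hWLE1).inter hLEzw.compl
  have hB2adef : Set.Definable Set.univ L B2a := hUdef.inter hWLE1
  have hB2bdef : Set.Definable Set.univ L B2b := hUdef.inter hLEwz.compl
  set proj : (((Fin m ⊕ Fin d) ⊕ Fin 1) → ℚ_[p]) → (Fin m ⊕ Fin d → ℚ_[p]) :=
    fun g => g ∘ Sum.inl with hprojdef
  have hvinl : ∀ (z : Fin m ⊕ Fin d → ℚ_[p]) (w : ℚ_[p]),
      (Sum.elim z (fun _ : Fin 1 => w)) ∘ Sum.inl = z := fun z w => funext fun a => rfl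
  have hKv : ∀ (z : Fin m ⊕ Fin d → ℚ_[p]) (w : ℚ_[p]),
      (Sum.elim z (fun _ : Fin 1 => w) ∈ U) ↔ w ∈ Kset S i z := by
    intro z w
    rw [hUmem, hvinl]
    exact Iff.rfl
  have hEx1 : ∀ z : Fin m ⊕ Fin d → ℚ_[p], z ∈ proj '' B1 ↔
      ∃ w, w ∈ Kset S i z ∧ ‖w‖ ≤ 1 ∧ ¬ ‖w‖ ≤ ‖z (Sum.inr i)‖ := by
    intro z
    rw [hmemimg B1 ?_ z]
    · constructor
      · rintro ⟨w, ⟨hU1, hU2⟩, hU3⟩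
        exact ⟨w, (hKv z w).1 hU1, hU2, hU3⟩
      · rintro ⟨w, h1, h2, h3⟩
        exact ⟨w, ⟨(hKv z w).2 h1, h2⟩, h3⟩

    · intro v v' hl h0
      have hii : v (Sum.inl (Sum.inr i)) = v' (Sum.inl (Sum.inr i)) := congrFun hl (Sum.inr i)
      rw [hB1, hB2a]
      simp only [Set.mem_inter_iff, Set.mem_compl_iff, Set.mem_setOf_eq, hUmem, hl, h0, hii]
  have hEx2a : ∀ z : Fin m ⊕ Fin d → ℚ_[p], z ∈ proj '' B2a ↔
      ∃ w, w ∈ Kset S i z ∧ ‖w‖ ≤ 1 := by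
    intro z
    rw [hmemimg B2a ?_ z]
    · constructor
      · rintro ⟨w, hU1, hU2⟩
        exact ⟨w, (hKv z w).1 hU1, hU2⟩
      · rintro ⟨w, h1, h2⟩
        exact ⟨w, (hKv z w).2 h1, h2⟩
    · intro v v' hl h0
      rw [hB2a]
      simp only [Set.mem_inter_iff, Set.mem_setOf_eq, hUmem, hl, h0]
  have hEx2b : ∀ z : Fin m ⊕ Fin d → ℚ_[p], z ∈ proj '' B2b ↔
      ∃ w, w ∈ Kset S i z ∧ ¬ ‖z (Sum.inr i)‖ ≤ ‖w‖ := by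
    intro z
    rw [hmemimg B2b ?_ z]
    · constructor
      · rintro ⟨w, hU1, hU2⟩
        exact ⟨w, (hKv z w).1 hU1, hU2⟩
      · rintro ⟨w, h1, h2⟩
        exact ⟨w, (hKv z w).2 h1, h2⟩
    · intro v v' hl h0
      have hii : v (Sum.inl (Sum.inr i)) = v' (Sum.inl (Sum.inr i)) := congrFun hl (Sum.inr i)
      rw [hB2b]
      simp only [Set.mem_inter_iff, Set.mem_compl_iff, Set.mem_setOf_eq, hUmem, hl, h0, hii]
  have hKself : ∀ z : Fin m ⊕ Fin d → ℚ_[p],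
      (z (Sum.inr i) ∈ Kset S i z) ↔ z ∈ Wset S ((i : ℕ) + 1) := by
    intro z
    show upd z i (z (Sum.inr i)) ∈ Wset S ((i : ℕ) + 1) ↔ _
    rw [show upd z i (z (Sum.inr i)) = z from Function.update_eq_self _ _]
  have htarget : {z : Fin m ⊕ Fin d → ℚ_[p] | CanCond S i z} =
      Wset S ((i : ℕ) + 1) ∩
        (({z : Fin m ⊕ Fin d → ℚ_[p] | ‖z (Sum.inr i)‖ ≤ 1} ∩ (proj '' B1)ᶜ) ∪
         ((proj '' B2a)ᶜ ∩ (proj '' B2b)ᶜ)) := by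
    ext z
    simp only [Set.mem_setOf_eq, Set.mem_inter_iff, Set.mem_union, Set.mem_compl_iff,
      hEx1 z, hEx2a z, hEx2b z]
    unfold CanCond
    rw [hKself z]
    push_neg
    constructor
    · rintro ⟨hW, hbr⟩
      refine ⟨hW, ?_⟩
      rcases hbr with ⟨h1, h2⟩ | ⟨h1, h2⟩
      · exact Or.inl ⟨h1, fun w hw hle => h2 w hw hle⟩
      · exact Or.inr ⟨fun w hw => h1 w hw, fun w hw => h2 w hw⟩
    · rintro ⟨hW, hbr⟩
      refine ⟨hW, ?_⟩
      rcases hbr with ⟨h1, h2⟩ | ⟨h1, h2⟩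
      · exact Or.inl ⟨h1, fun w hw hle => h2 w hw hle⟩
      · exact Or.inr ⟨fun w hw => h1 w hw, fun w hw => h2 w hw⟩
  rw [htarget]
  exact (ldef_Wset L φq hS ((i : ℕ) + 1)).inter
    ((hZLE1.inter (hproj B1 hB1def).compl).union
      ((hproj B2a hB2adef).compl.inter (hproj B2b hB2bdef).compl))

end Defin2


lemma ldef_Cset (L : Language) [L.Structure ℚ_[p] ] (φq : Language.ring →ᴸ L)
    [φq.IsExpansionOn ℚ_[p] ] {m d : ℕ} {S : Set (Fin m ⊕ Fin d → ℚ_[p])}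
    (hS : LDef p L S) : LDef p L (Cset S) := by
  have h1 := ldef_Wset L φq hS d
  have h2 : Set.Definable Set.univ L
      {z : Fin m ⊕ Fin d → ℚ_[p] | ∀ i : Fin d, CanCond S i z} := by
    have heq : {z : Fin m ⊕ Fin d → ℚ_[p] | ∀ i : Fin d, CanCond S i z} =
        ⋂ i ∈ (Finset.univ : Finset (Fin d)), {z | CanCond S i z} := by
      ext z
      simp
    rw [heq]
    exact Set.definable_biInter_finset (fun i => ldef_CanCond L φq hS i) _
  exact Set.Definable.inter h1 h2

/-- Assume `(ℚ_p, ℒ)` is p-minimal.  Let `S ⊆ ℚ_p^m × |ℚ_p|^d` be a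
definable set (encoded by its preimage in `ℚ_p^{m+d}`, a definable set which is invariant
under changes of the last `d` coordinates preserving their absolute values), and let
`A ⊆ ℚ_p^m` be the image of the projection of `S` onto `ℚ_p^m`.  Then there is a
definable function `σ : A → |ℚ_p|^d` with `(x, σ x) ∈ S` for every `x ∈ A`. -/
theorem definable_section_into_value_set
    (L : Language) [L.Structure ℚ_[p] ]
    (φ : Language.ring →ᴸ L) [φ.IsExpansionOn ℚ_[p] ]
    (hmin : PMinimalQp p L) (m d : ℕ)
    (S : Set (Fin m ⊕ Fin d → ℚ_[p])) (hS : LDef p L S)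
    (hinv : ∀ z z' : Fin m ⊕ Fin d → ℚ_[p], z ∘ Sum.inl = z' ∘ Sum.inl →
      (∀ i : Fin d, ‖z (Sum.inr i)‖ = ‖z' (Sum.inr i)‖) → (z ∈ S ↔ z' ∈ S)) :
    ∃ σ : (Fin m → ℚ_[p]) → (Fin d → ℝ),
      LDef p L {z : Fin m ⊕ Fin d → ℚ_[p] |
        (∃ y : Fin d → ℚ_[p], Sum.elim (z ∘ Sum.inl) y ∈ S) ∧
        ∀ i : Fin d, ‖z (Sum.inr i)‖ = σ (z ∘ Sum.inl) i} ∧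
      ∀ x : Fin m → ℚ_[p], (∃ y : Fin d → ℚ_[p], Sum.elim x y ∈ S) →
        ∃ y : Fin d → ℚ_[p], (∀ i, ‖y i‖ = σ x i) ∧ Sum.elim x y ∈ S := by
  classical
  have hZ : ∀ x : Fin m → ℚ_[p], ∃ z : Fin m ⊕ Fin d → ℚ_[p],
      (∃ y : Fin d → ℚ_[p], Sum.elim x y ∈ S) → (z ∈ Cset S ∧ z ∘ Sum.inl = x) := by
    intro x
    by_cases hx : ∃ y : Fin d → ℚ_[p], Sum.elim x y ∈ S
    · obtain ⟨z, hz, hzl⟩ := exists_mem_Cset hx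
      exact ⟨z, fun _ => ⟨hz, hzl⟩⟩
    · exact ⟨Sum.elim x 0, fun h => absurd h hx⟩
  choose Z hZspec using hZ
  refine ⟨fun x i => ‖Z x (Sum.inr i)‖, ?_, ?_⟩
  · have hgraph : {z : Fin m ⊕ Fin d → ℚ_[p] |
        (∃ y : Fin d → ℚ_[p], Sum.elim (z ∘ Sum.inl) y ∈ S) ∧
        ∀ i : Fin d, ‖z (Sum.inr i)‖ =
          (fun (x : Fin m → ℚ_[p]) (i : Fin d) => ‖Z x (Sum.inr i)‖) (z ∘ Sum.inl) i}
        = Cset S := by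
      ext z
      simp only [Set.mem_setOf_eq]
      constructor
      · rintro ⟨hA, hnorm⟩
        obtain ⟨hZC, hZl⟩ := hZspec (z ∘ Sum.inl) hA
        exact (Cset_inv hZl (fun j => (hnorm j).symm)).1 hZC
      · intro hzC
        have hA : ∃ y : Fin d → ℚ_[p], Sum.elim (z ∘ Sum.inl) y ∈ S := by
          obtain ⟨⟨y, hy, -⟩, -⟩ := hzC
          exact ⟨y, hy⟩
        obtain ⟨hZC, hZl⟩ := hZspec (z ∘ Sum.inl) hA
        exact ⟨hA, fun i => norms_eq_of_mem_Cset hzC hZC hZl.symm i⟩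
    rw [hgraph]
    exact ldef_Cset L φ hS
  · intro x hx
    obtain ⟨hZC, hZl⟩ := hZspec x hx
    refine ⟨Z x ∘ Sum.inr, fun i => rfl, ?_⟩
    have h := mem_S_of_mem_Cset hinv hZC
    rwa [hZl] at h

end PadicMin
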